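/- Every weak-curvature tensor P ∈ P(h) for h ⊆ so(n) vanishes on the subspace annihilated by h: if h·v = 0 for the vector v (i.e., Av = 0 for all A ∈ h), and additionally v is orthogonal to the span of the images of all elements of h, then P(v) = 0. In particular, with the decomposition ℝⁿ = ℝ^{n_0} ⊕ ℝ^{n_{s+1}} where h annihilates ℝ^{n_{s+1}} and h ⊆ so(n_0), every P ∈ P(h) satisfies P|_{ℝ^{n_{s+1}}} = 0. -/

import Mathlib

open Matrix

attribute [local instance 100] LieRing.ofAssociativeRing

/-- `so(n)` as a Lie subalgebra of the matrix Lie algebra. -/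
noncomputable def son (n : ℕ) : LieSubalgebra ℝ (Matrix (Fin n) (Fin n) ℝ) :=
  skewAdjointMatricesLieSubalgebra (1 : Matrix (Fin n) (Fin n) ℝ)

/-- The space `P(h)` of weak-curvature tensors of type `h ⊆ so(n)`. -/
noncomputable def Pset (n : ℕ) (h : LieSubalgebra ℝ (Matrix (Fin n) (Fin n) ℝ)) :
    Set ((Fin n → ℝ) →ₗ[ℝ] Matrix (Fin n) (Fin n) ℝ) :=
  {P | (∀ u : Fin n → ℝ, P u ∈ h) ∧
    ∀ u v w : Fin n → ℝ,
      ((P u).mulVec v) ⬝ᵥ w + ((P v).mulVec w) ⬝ᵥ u + ((P w).mulVec u) ⬝ᵥ v = 0}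

/-- A weak-curvature tensor `P ∈ P(h)` vanishes on any vector `v` annihilated by `h` and
orthogonal to the images of all elements of `h`. In particular `P` vanishes on the subspace
`ℝ^{n_{s+1}}` annihilated by `h`. -/
theorem stmt18 (n : ℕ) (h : LieSubalgebra ℝ (Matrix (Fin n) (Fin n) ℝ)) (hh : h ≤ son n)
    (P : (Fin n → ℝ) →ₗ[ℝ] Matrix (Fin n) (Fin n) ℝ) (hP : P ∈ Pset n h)
    (v : Fin n → ℝ)
    (hv1 : ∀ A ∈ h, A.mulVec v = 0)
    (hv2 : ∀ A ∈ h, ∀ u : Fin n → ℝ, (A.mulVec u) ⬝ᵥ v = 0) :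
    P v = 0 := by
  obtain ⟨hmem, hB⟩ := hP
  have key : ∀ w u : Fin n → ℝ, ((P v).mulVec w) ⬝ᵥ u = 0 := by
    intro w u
    have := hB u v w
    rw [hv1 (P u) (hmem u), hv2 (P w) (hmem w) u, zero_dotProduct, zero_add, add_zero] at this
    exact this
  ext i j
  have h1 : (P v).mulVec (Pi.single j 1) = 0 := by
    ext i'
    have := key (Pi.single j 1) (Pi.single i' 1)
    simpa [dotProduct_single] using this
  have := congrFun h1 i
  simpa [mulVec_single] using this
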